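/- Let s < u, let f : [s, u] → ℝ be càdlàg (right-continuous with left limits f(t−)), and let h : ℝ → ℝ be continuous and bounded with h(0) = 0. For each n, let πₙ = {s = t₀ⁿ < t₁ⁿ < ⋯ < t_{kₙ}ⁿ = u} be a partition of [s, u] with mesh |πₙ| = max_j (t_jⁿ − t_{j−1}ⁿ) → 0 as n → ∞. Then ∫_s^u ( Σ_j 1_{(t_{j−1}ⁿ, t_jⁿ]}(t) · h(f(t_jⁿ) − f(t_{j−1}ⁿ)) )² dt → 0 as n → ∞. -/

import Mathlib

open Filter Set MeasureTheory

lemma stmt7_find (g : ℕ → ℝ) (m : ℕ) (τ : ℝ) (h1 : g 0 < τ) (h2 : τ ≤ g m) :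
    ∃ j, j < m ∧ g j < τ ∧ τ ≤ g (j + 1) := by
  induction m with
  | zero => exact absurd h2 (not_le.2 h1)
  | succ m ih =>
    by_cases hc : τ ≤ g m
    · obtain ⟨j, hj, hj1, hj2⟩ := ih hc
      exact ⟨j, hj.trans (Nat.lt_succ_self m), hj1, hj2⟩
    · exact ⟨m, Nat.lt_succ_self m, not_le.1 hc, h2⟩

lemma stmt7_meas (s u : ℝ) (f : ℝ → ℝ)
    (hright : ∀ t ∈ Ico s u, Tendsto f (nhdsWithin t (Ici t)) (nhds (f t))) :
    Measurable ((Icc s u).indicator (fun x => Real.arctan (f x))) := by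
  have h2n : ∀ n : ℕ, (0:ℝ) < 2 ^ n := fun n => by positivity
  have hge : ∀ (n : ℕ) (τ : ℝ), τ ≤ s + (⌈(τ - s) * 2 ^ n⌉ : ℝ) / 2 ^ n := by
    intro n τ
    rw [← sub_le_iff_le_add', le_div_iff₀ (h2n n)]
    exact Int.le_ceil _
  have hle : ∀ (n : ℕ) (τ : ℝ), s + (⌈(τ - s) * 2 ^ n⌉ : ℝ) / 2 ^ n ≤ τ + ((2:ℝ) ^ n)⁻¹ := by
    intro n τ
    have h1 : (⌈(τ - s) * 2 ^ n⌉ : ℝ) ≤ (τ - s) * 2 ^ n + 1 := (Int.ceil_lt_add_one _).le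
    calc s + (⌈(τ - s) * 2 ^ n⌉ : ℝ) / 2 ^ n ≤ s + ((τ - s) * 2 ^ n + 1) / 2 ^ n := by
          gcongr
      _ = τ + ((2:ℝ) ^ n)⁻¹ := by field_simp; ring
  have key : ∀ n : ℕ, Measurable
      ((Icc s u).indicator
        (fun τ => Real.arctan (f (min u (s + (⌈(τ - s) * 2 ^ n⌉ : ℝ) / 2 ^ n))))) := by
    intro n
    have hm : Measurable fun τ : ℝ => (⌈(τ - s) * 2 ^ n⌉ : ℤ) :=
      Int.measurable_ceil.comp (by measurability)
    have m2 : Measurable fun τ : ℝ =>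
        Real.arctan (f (min u (s + (⌈(τ - s) * 2 ^ n⌉ : ℝ) / 2 ^ n))) :=
      (measurable_of_countable (fun m : ℤ => Real.arctan (f (min u (s + (m : ℝ) / 2 ^ n))))).comp hm
    exact m2.indicator measurableSet_Icc
  apply measurable_of_tendsto_metrizable key
  rw [tendsto_pi_nhds]
  intro τ
  by_cases hτ : τ ∈ Icc s u
  · simp only [indicator_of_mem hτ]
    by_cases hu : τ = u
    · have heq : ∀ n : ℕ, min u (s + (⌈(τ - s) * 2 ^ n⌉ : ℝ) / 2 ^ n) = u := by
        intro n
        exact min_eq_left (hu ▸ hge n τ)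
      simp only [heq]
      rw [hu]
      exact tendsto_const_nhds
    · have hτu : τ < u := lt_of_le_of_ne hτ.2 hu
      have hinv : Tendsto (fun n : ℕ => ((2:ℝ) ^ n)⁻¹) atTop (nhds 0) := by
        simpa [inv_pow] using
          tendsto_pow_atTop_nhds_zero_of_lt_one (by norm_num : (0:ℝ) ≤ 2⁻¹)
            (by norm_num : (2:ℝ)⁻¹ < 1)
      have htr : Tendsto (fun n : ℕ => min u (s + (⌈(τ - s) * 2 ^ n⌉ : ℝ) / 2 ^ n)) atTop
          (nhdsWithin τ (Ici τ)) := by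
        apply tendsto_nhdsWithin_of_tendsto_nhds_of_eventually_within
        · apply tendsto_of_tendsto_of_tendsto_of_le_of_le (g := fun _ : ℕ => τ)
            (h := fun n : ℕ => τ + ((2:ℝ) ^ n)⁻¹) tendsto_const_nhds
          · simpa using tendsto_const_nhds.add hinv
          · intro n
            exact le_min hτu.le (hge n τ)
          · intro n
            exact (min_le_right _ _).trans (hle n τ)
        · exact Eventually.of_forall fun n => le_min hτu.le (hge n τ)
      exact (Real.continuous_arctan.tendsto _).comp ((hright τ ⟨hτ.1, hτu⟩).comp htr)
  · simp only [indicator_of_notMem hτ]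
    exact tendsto_const_nhds

lemma stmt7_ae (s u : ℝ) (f fl : ℝ → ℝ)
    (hright : ∀ t ∈ Ico s u, Tendsto f (nhdsWithin t (Ici t)) (nhds (f t)))
    (hleft : ∀ t ∈ Ioc s u, Tendsto f (nhdsWithin t (Iio t)) (nhds (fl t)))
    (hGmeas : Measurable ((Icc s u).indicator (fun x => Real.arctan (f x)))) :
    ∀ᵐ τ, τ ∈ Ioo s u → f τ = fl τ := by
  set G := (Icc s u).indicator (fun x => Real.arctan (f x)) with hG
  have hGbd : ∀ x, ‖G x‖ ≤ ((Icc s u).indicator (fun _ => Real.pi / 2)) x := by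
    intro x
    by_cases hx : x ∈ Icc s u
    · rw [hG, indicator_of_mem hx, indicator_of_mem hx, Real.norm_eq_abs]
      exact (abs_lt.2 ⟨Real.neg_pi_div_two_lt_arctan _, Real.arctan_lt_pi_div_two _⟩).le
    · rw [hG, indicator_of_notMem hx, indicator_of_notMem hx, norm_zero]
  have hGint : Integrable G := by
    refine Integrable.mono' ?_ hGmeas.aestronglyMeasurable (Eventually.of_forall hGbd)
    rw [integrable_indicator_iff measurableSet_Icc]
    exact integrableOn_const measure_Icc_lt_top.ne
  have hLeb := IsUnifLocDoublingMeasure.ae_tendsto_average_norm_sub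
    (μ := (volume : Measure ℝ)) hGint.locallyIntegrable 1
  filter_upwards [hLeb] with τ hτLeb hmem
  by_contra hne
  have hτIcc : τ ∈ Icc s u := ⟨hmem.1.le, hmem.2.le⟩
  set c := |Real.arctan (f τ) - Real.arctan (fl τ)| with hcdef
  have hc : 0 < c :=
    abs_pos.2 (sub_ne_zero.2 fun hEq => hne (Real.arctan_injective hEq))
  have hlt : Tendsto (fun y => Real.arctan (f y)) (nhdsWithin τ (Iio τ))
      (nhds (Real.arctan (fl τ))) :=
    (Real.continuous_arctan.tendsto _).comp (hleft τ ⟨hmem.1, hmem.2.le⟩)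
  obtain ⟨δ, hδpos, hδ⟩ := Metric.tendsto_nhdsWithin_nhds.1 hlt (c / 2) (by positivity)
  set δ' := min δ (τ - s) with hδ'def
  have hδ'pos : 0 < δ' := lt_min hδpos (sub_pos.2 hmem.1)
  have hτlim : Tendsto (fun r : ℝ => ⨍ y in Metric.closedBall τ r, ‖G y - G τ‖)
      (nhdsWithin 0 (Ioi 0)) (nhds 0) := by
    refine hτLeb (fun _ => τ) id tendsto_id ?_
    filter_upwards [self_mem_nhdsWithin] with r hr
    simp only [Metric.mem_closedBall, dist_self, one_mul, id_eq]
    exact le_of_lt hr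
  have hGτ : G τ = Real.arctan (f τ) := indicator_of_mem hτIcc _
  have claim : ∀ r ∈ Ioo (0:ℝ) δ', c / 4 ≤ ⨍ y in Metric.closedBall τ r, ‖G y - G τ‖ := by
    intro r hr
    have hrpos : 0 < r := hr.1
    have hsub : Ioo (τ - r) τ ⊆ Metric.closedBall τ r := by
      intro y hy
      rw [Metric.mem_closedBall, Real.dist_eq, abs_le]
      constructor <;> [linarith [hy.1]; linarith [hy.2]]
    have hYm : ∀ y ∈ Ioo (τ - r) τ, c / 2 ≤ ‖G y - G τ‖ := by
      intro y hy
      have hys : s < y := by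
        have h1 : δ' ≤ τ - s := min_le_right _ _
        linarith [hy.1, hr.2]
      have hyIcc : y ∈ Icc s u := ⟨hys.le, (hy.2.trans hmem.2).le⟩
      have hGy : G y = Real.arctan (f y) := indicator_of_mem hyIcc _
      have hdy : dist (Real.arctan (f y)) (Real.arctan (fl τ)) < c / 2 := by
        refine hδ (mem_Iio.2 hy.2) ?_
        rw [Real.dist_eq, abs_of_nonpos (by linarith [hy.2])]
        have : δ' ≤ δ := min_le_left _ _
        linarith [hy.1, hr.2]
      rw [Real.dist_eq] at hdy
      have htri := abs_sub_le (Real.arctan (f τ)) (Real.arctan (f y)) (Real.arctan (fl τ))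
      rw [hGy, hGτ, Real.norm_eq_abs, abs_sub_comm]
      linarith [htri]
    have hint : IntegrableOn (fun y => ‖G y - G τ‖) (Metric.closedBall τ r) :=
      ((hGint.integrableOn).sub (integrableOn_const
        measure_closedBall_lt_top.ne)).norm
    have h1 : ∫ _ in Ioo (τ - r) τ, (c / 2) ≤ ∫ y in Ioo (τ - r) τ, ‖G y - G τ‖ :=
      setIntegral_mono_on (integrableOn_const measure_Ioo_lt_top.ne)
        (hint.mono_set hsub) measurableSet_Ioo hYm
    have h2 : ∫ y in Ioo (τ - r) τ, ‖G y - G τ‖ ≤ ∫ y in Metric.closedBall τ r, ‖G y - G τ‖ :=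
      setIntegral_mono_set hint (Eventually.of_forall fun y => norm_nonneg _)
        (HasSubset.Subset.eventuallyLE hsub)
    have hconst : ∫ _ in Ioo (τ - r) τ, (c / 2) = r * (c / 2) := by
      rw [setIntegral_const, measureReal_def, Real.volume_Ioo]
      rw [ENNReal.toReal_ofReal (by linarith : (0:ℝ) ≤ τ - (τ - r)), smul_eq_mul]
      ring
    rw [setAverage_eq, measureReal_def, Real.volume_closedBall, ENNReal.toReal_ofReal (by linarith : (0:ℝ) ≤ 2 * r),
      smul_eq_mul]
    have hintge : r * (c / 2) ≤ ∫ y in Metric.closedBall τ r, ‖G y - G τ‖ := by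
      rw [← hconst]; linarith
    have h2r : (0:ℝ) < (2 * r)⁻¹ := by positivity
    calc c / 4 = (2 * r)⁻¹ * (r * (c / 2)) := by field_simp; ring
      _ ≤ (2 * r)⁻¹ * ∫ y in Metric.closedBall τ r, ‖G y - G τ‖ := by
          exact mul_le_mul_of_nonneg_left hintge h2r.le
  have hev : ∀ᶠ r in nhdsWithin 0 (Ioi 0),
      c / 4 ≤ ⨍ y in Metric.closedBall τ r, ‖G y - G τ‖ :=
    Eventually.mono (Ioo_mem_nhdsGT_of_mem ⟨le_refl 0, hδ'pos⟩) claim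
  have := ge_of_tendsto hτlim hev
  linarith

/-- Let `s < u`, let `f` be càdlàg on `[s, u]` (right-continuous on `[s,u)` with left limits
`fl t` on `(s,u]`), and let `h : ℝ → ℝ` be continuous and bounded with `h 0 = 0`. For partitions
`πₙ = {s = t₀ⁿ < ⋯ < t_{kₙ}ⁿ = u}` with mesh tending to `0`,
`∫_s^u (Σ_j 1_{(t_{j−1}ⁿ, t_jⁿ]}(τ) · h(f(t_jⁿ) − f(t_{j−1}ⁿ)))² dτ → 0`. -/
theorem stmt7 (s u : ℝ) (hsu : s < u) (f fl : ℝ → ℝ)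
    (hright : ∀ t ∈ Ico s u, Tendsto f (nhdsWithin t (Ici t)) (nhds (f t)))
    (hleft : ∀ t ∈ Ioc s u, Tendsto f (nhdsWithin t (Iio t)) (nhds (fl t)))
    (h : ℝ → ℝ) (hcont : Continuous h) (hbdd : ∃ C, ∀ x, |h x| ≤ C) (h0 : h 0 = 0)
    (k : ℕ → ℕ) (hk : ∀ n, 1 ≤ k n) (t : ℕ → ℕ → ℝ)
    (ht0 : ∀ n, t n 0 = s) (htk : ∀ n, t n (k n) = u)
    (hmono : ∀ n, ∀ j < k n, t n j < t n (j + 1))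
    (hmesh : ∀ ε > 0, ∀ᶠ n in atTop, ∀ j < k n, t n (j + 1) - t n j < ε) :
    Tendsto
      (fun n => ∫ τ in Icc s u,
        (∑ j ∈ Finset.range (k n),
          (Ioc (t n j) (t n (j + 1))).indicator
            (fun _ => h (f (t n (j + 1)) - f (t n j))) τ) ^ 2)
      atTop (nhds 0) := by
  obtain ⟨C, hC⟩ := hbdd
  set C' := max C 0 with hC'def
  have hC'0 : 0 ≤ C' := le_max_right _ _
  have hC' : ∀ x, |h x| ≤ C' := fun x => (hC x).trans (le_max_left _ _)
  -- monotonicity of partition points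
  have tmono : ∀ n, ∀ a b, a ≤ b → b ≤ k n → t n a ≤ t n b := by
    intro n a b hab hbk
    induction b, hab using Nat.le_induction with
    | base => exact le_refl _
    | succ b hab ih =>
      exact (ih (le_trans (Nat.le_succ _) hbk)).trans
        (hmono n b (Nat.lt_of_succ_le hbk)).le
  -- the sum collapses to a single term
  have key_sum : ∀ n τ j, j < k n → τ ∈ Ioc (t n j) (t n (j + 1)) →
      (∑ i ∈ Finset.range (k n), (Ioc (t n i) (t n (i + 1))).indicator
        (fun _ => h (f (t n (i + 1)) - f (t n i))) τ) = h (f (t n (j + 1)) - f (t n j)) := by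
    intro n τ j hj hτ
    rw [Finset.sum_eq_single_of_mem j (Finset.mem_range.2 hj)]
    · exact indicator_of_mem hτ _
    · intro i hi hne
      refine indicator_of_notMem ?_ _
      rcases lt_or_gt_of_ne hne with hlt | hgt
      · have hle : t n (i + 1) ≤ t n j := tmono n (i + 1) j hlt hj.le
        intro hmem
        exact absurd hτ.1 (not_lt.2 (hmem.2.trans hle))
      · have hle : t n (j + 1) ≤ t n i := tmono n (j + 1) i hgt (Finset.mem_range.1 hi).le
        intro hmem
        exact absurd (hτ.2.trans hle) (not_le.2 hmem.1)
  -- uniform bound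
  have key_bound : ∀ n τ, |∑ i ∈ Finset.range (k n), (Ioc (t n i) (t n (i + 1))).indicator
      (fun _ => h (f (t n (i + 1)) - f (t n i))) τ| ≤ C' := by
    intro n τ
    by_cases hex : ∃ j, j < k n ∧ τ ∈ Ioc (t n j) (t n (j + 1))
    · obtain ⟨j, hj, hτ⟩ := hex
      rw [key_sum n τ j hj hτ]
      exact hC' _
    · push_neg at hex
      rw [Finset.sum_eq_zero fun i hi =>
        indicator_of_notMem (hex i (Finset.mem_range.1 hi)) _, abs_zero]
      exact hC'0
  have hGmeas := stmt7_meas s u f hright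
  have hae := stmt7_ae s u f fl hright hleft hGmeas
  have hmain := MeasureTheory.tendsto_integral_of_dominated_convergence
      (μ := volume.restrict (Icc s u))
      (F := fun n τ => (∑ j ∈ Finset.range (k n), (Ioc (t n j) (t n (j + 1))).indicator
          (fun _ => h (f (t n (j + 1)) - f (t n j))) τ) ^ 2)
      (f := fun _ => (0:ℝ)) (bound := fun _ => C' ^ 2) ?meas ?int ?bd ?lim
  · simpa using hmain
  case meas =>
    intro n
    refine Measurable.aestronglyMeasurable ?_
    exact (Finset.measurable_sum _ fun i _ =>
      Measurable.indicator measurable_const measurableSet_Ioc).pow_const 2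
  case int => exact integrableOn_const measure_Icc_lt_top.ne
  case bd =>
    intro n
    refine Eventually.of_forall fun τ => ?_
    rw [Real.norm_eq_abs, abs_pow]
    exact pow_le_pow_left₀ (abs_nonneg _) (key_bound n τ) 2
  case lim =>
    have h1 : ∀ᵐ τ ∂(volume.restrict (Icc s u)), τ ∈ Ioo s u → f τ = fl τ :=
      ae_restrict_of_ae hae
    have hsu_ne : ∀ᵐ τ : ℝ, τ ≠ s ∧ τ ≠ u := by
      have hs : ∀ᵐ τ : ℝ, τ ≠ s := by
        rw [ae_iff]
        simp only [not_not, setOf_eq_eq_singleton]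
        exact Real.volume_singleton
      have hu : ∀ᵐ τ : ℝ, τ ≠ u := by
        rw [ae_iff]
        simp only [not_not, setOf_eq_eq_singleton]
        exact Real.volume_singleton
      exact hs.and hu
    filter_upwards [h1, ae_restrict_mem measurableSet_Icc, ae_restrict_of_ae hsu_ne]
      with τ hjump hIcc hne
    have hτs : s < τ := lt_of_le_of_ne hIcc.1 (Ne.symm hne.1)
    have hτu : τ < u := lt_of_le_of_ne hIcc.2 hne.2
    have hfeq : f τ = fl τ := hjump ⟨hτs, hτu⟩
    choose J hJlt hJl hJr using fun n =>
      stmt7_find (t n) (k n) τ (by rw [ht0]; exact hτs) (by rw [htk]; exact hτu.le)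
    have hR : Tendsto (fun n => t n (J n + 1)) atTop (nhdsWithin τ (Ici τ)) := by
      apply tendsto_nhdsWithin_of_tendsto_nhds_of_eventually_within
      · refine Metric.tendsto_nhds.2 fun ε hε => ?_
        filter_upwards [hmesh ε hε] with n hn
        rw [Real.dist_eq, abs_of_nonneg (sub_nonneg.2 (hJr n))]
        calc t n (J n + 1) - τ ≤ t n (J n + 1) - t n (J n) := by linarith [hJl n]
          _ < ε := hn (J n) (hJlt n)
      · exact Eventually.of_forall fun n => hJr n
    have hL : Tendsto (fun n => t n (J n)) atTop (nhdsWithin τ (Iio τ)) := by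
      apply tendsto_nhdsWithin_of_tendsto_nhds_of_eventually_within
      · refine Metric.tendsto_nhds.2 fun ε hε => ?_
        filter_upwards [hmesh ε hε] with n hn
        rw [Real.dist_eq, abs_of_nonpos (sub_nonpos.2 (hJl n).le), neg_sub]
        calc τ - t n (J n) ≤ t n (J n + 1) - t n (J n) := by linarith [hJr n]
          _ < ε := hn (J n) (hJlt n)
      · exact Eventually.of_forall fun n => hJl n
    have hco : Tendsto (fun n => h (f (t n (J n + 1)) - f (t n (J n)))) atTop (nhds 0) := by
      have hd : Tendsto (fun n => f (t n (J n + 1)) - f (t n (J n))) atTop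
          (nhds (f τ - fl τ)) :=
        Tendsto.sub ((hright τ ⟨hτs.le, hτu⟩).comp hR) ((hleft τ ⟨hτs, hτu.le⟩).comp hL)
      have := (hcont.tendsto (f τ - fl τ)).comp hd
      rw [hfeq, sub_self, h0] at this
      exact this
    have hsumlim : Tendsto (fun n => ∑ j ∈ Finset.range (k n),
        (Ioc (t n j) (t n (j + 1))).indicator
          (fun _ => h (f (t n (j + 1)) - f (t n j))) τ) atTop (nhds 0) :=
      hco.congr fun n => (key_sum n τ (J n) (hJlt n) ⟨hJl n, hJr n⟩).symm
    simpa using hsumlim.pow 2
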